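/- Let K/F be a finite Galois extension whose Galois group is abelian. If x, y ∈ K have degrees m and n over F with gcd(m, n) = 1, then F[x, y] = F[αx + βy] for all nonzero α, β ∈ F. -/

import Mathlib

open IntermediateField Module

private lemma fixAdjoin {F K : Type*} [Field F] [Field K] [Algebra F K]
    (σ : K ≃ₐ[F] K) {w : K} (hw : σ w = w) :
    ∀ a ∈ IntermediateField.adjoin F {w}, σ a = a := by
  intro a ha
  induction ha using IntermediateField.adjoin_induction with
  | mem b hb => rw [Set.mem_singleton_iff] at hb; rw [hb]; exact hw
  | algebraMap b => exact σ.commutes b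
  | add b c _ _ hb hc => rw [map_add, hb, hc]
  | inv b _ hb => rw [map_inv₀, hb]
  | mul b c _ _ hb hc => rw [map_mul, hb, hc]

private lemma conjMem {F K : Type*} [Field F] [Field K] [Algebra F K]
    [FiniteDimensional F K] [IsGalois F K]
    (habelian : ∀ σ τ : K ≃ₐ[F] K, σ * τ = τ * σ)
    (σ : K ≃ₐ[F] K) (w : K) : σ w ∈ IntermediateField.adjoin F {w} := by
  rw [← IsGalois.fixedField_fixingSubgroup (IntermediateField.adjoin F {w})]
  rintro ⟨τ, hτ⟩
  have hτw : τ w = w := by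
    rw [IntermediateField.mem_fixingSubgroup_iff] at hτ
    exact hτ w (IntermediateField.mem_adjoin_simple_self F w)
  show τ (σ w) = σ w
  calc τ (σ w) = (τ * σ) w := rfl
    _ = (σ * τ) w := by rw [habelian]
    _ = σ (τ w) := rfl
    _ = σ w := by rw [hτw]

private lemma indexFixing {F K : Type*} [Field F] [Field K] [Algebra F K]
    [FiniteDimensional F K] [IsGalois F K] (E : IntermediateField F K) :
    (IntermediateField.fixingSubgroup E).index = Module.finrank F E := by
  classical
  have h1 : Nat.card (IntermediateField.fixingSubgroup E) = finrank E K := by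
    rw [Nat.card_eq_fintype_card]
    simpa [Nat.card_eq_fintype_card] using IsGalois.card_fixingSubgroup_eq_finrank E
  have h2 : Nat.card (K ≃ₐ[F] K) = finrank F K := by
    rw [Nat.card_eq_fintype_card]
    simpa [Nat.card_eq_fintype_card] using IsGalois.card_aut_eq_finrank F K
  have h3 := Subgroup.card_mul_index (IntermediateField.fixingSubgroup E)
  have h4 : finrank F E * finrank E K = finrank F K := finrank_mul_finrank F E K
  have hpos : 0 < finrank E K := finrank_pos
  rw [h1, h2, ← h4] at h3
  exact Nat.eq_of_mul_eq_mul_right hpos (by linarith [h3])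


private lemma iterPow {F K : Type*} [Field F] [Field K] [Algebra F K]
    (σ : K ≃ₐ[F] K) (w : K) (u : F) (h : σ w = w + algebraMap F K u) :
    ∀ k : ℕ, (σ ^ k) w = w + (k : K) * algebraMap F K u := by
  intro k
  induction k with
  | zero => simp
  | succ k ih =>
    rw [pow_succ', AlgEquiv.mul_apply, ih, map_add, map_mul, map_natCast, σ.commutes, h]
    push_cast
    ring

private lemma charDvd {F K : Type*} [Field F] [Field K] [Algebra F K]
    [FiniteDimensional F K] [IsGalois F K]
    (habelian : ∀ σ τ : K ≃ₐ[F] K, σ * τ = τ * σ)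
    (σ : K ≃ₐ[F] K) (w : K) (u : F) (hu : u ≠ 0)
    (h : σ w = w + algebraMap F K u) :
    ringChar K ∣ Module.finrank F (IntermediateField.adjoin F {w}) := by
  classical
  set H := IntermediateField.fixingSubgroup (IntermediateField.adjoin F {w}) with hH
  haveI : H.Normal := ⟨fun nn hnn g => by simpa [habelian g nn, mul_assoc] using hnn⟩
  set q := orderOf ((QuotientGroup.mk σ : (K ≃ₐ[F] K) ⧸ H)) with hq
  have hq_dvd : q ∣ H.index := by
    rw [Subgroup.index_eq_card]
    exact orderOf_dvd_natCard _
  have hqpos : 0 < q := orderOf_pos _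
  have hmem : σ ^ q ∈ H := by
    rw [← QuotientGroup.eq_one_iff]
    rw [QuotientGroup.mk_pow]
    exact pow_orderOf_eq_one _
  have hfix : (σ ^ q) w = w := by
    rw [IntermediateField.mem_fixingSubgroup_iff] at hmem
    exact hmem w (IntermediateField.mem_adjoin_simple_self F w)
  have h0 : (q : K) * algebraMap F K u = 0 := by
    have := iterPow σ w u h q
    rw [hfix] at this
    linear_combination -this
  have hKq : (q : K) = 0 := by
    rcases mul_eq_zero.1 h0 with h' | h'
    · exact h'
    · exact absurd ((map_eq_zero _).1 h') hu
  have hpq : ringChar K ∣ q := by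
    haveI := ringChar.charP K
    exact (CharP.cast_eq_zero_iff K (ringChar K) q).1 hKq
  rw [← indexFixing (IntermediateField.adjoin F {w})]
  exact hpq.trans hq_dvd

private lemma keyFix {F K : Type*} [Field F] [Field K] [Algebra F K]
    [FiniteDimensional F K] [IsGalois F K]
    (habelian : ∀ σ τ : K ≃ₐ[F] K, σ * τ = τ * σ)
    (x y : K) (m n : ℕ)
    (hm : Module.finrank F (IntermediateField.adjoin F {x}) = m)
    (hn : Module.finrank F (IntermediateField.adjoin F {y}) = n)
    (hcop : Nat.gcd m n = 1)
    (α β : F) (hα : α ≠ 0) (hβ : β ≠ 0)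
    (σ : K ≃ₐ[F] K) (hσ : σ (α • x + β • y) = α • x + β • y) :
    σ x = x ∧ σ y = y := by
  set A := algebraMap F K with hA
  have hσ' : A α * σ x + A β * σ y = A α * x + A β * y := by
    simpa [Algebra.smul_def, map_add, map_mul] using hσ
  set d := A α * (σ x - x) with hd
  have hd2 : d = A β * (y - σ y) := by rw [hd]; linear_combination hσ'
  have hdx : d ∈ IntermediateField.adjoin F {x} :=
    mul_mem (IntermediateField.algebraMap_mem _ α)
      (sub_mem (conjMem habelian σ x) (IntermediateField.mem_adjoin_simple_self F x))
  have hdy : d ∈ IntermediateField.adjoin F {y} := by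
    rw [hd2]
    exact mul_mem (IntermediateField.algebraMap_mem _ β)
      (sub_mem (IntermediateField.mem_adjoin_simple_self F y) (conjMem habelian σ y))
  have h1 : finrank F (IntermediateField.adjoin F {d}) ∣ m :=
    hm ▸ ⟨_, (IntermediateField.finrank_bot_mul_relfinrank
      (IntermediateField.adjoin_simple_le_iff.2 hdx)).symm⟩
  have h2 : finrank F (IntermediateField.adjoin F {d}) ∣ n :=
    hn ▸ ⟨_, (IntermediateField.finrank_bot_mul_relfinrank
      (IntermediateField.adjoin_simple_le_iff.2 hdy)).symm⟩
  have hone : finrank F (IntermediateField.adjoin F {d}) = 1 :=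
    Nat.dvd_one.1 (hcop ▸ Nat.dvd_gcd h1 h2)
  have hbot : IntermediateField.adjoin F {d} = ⊥ :=
    IntermediateField.finrank_eq_one_iff.1 hone
  have hdbot : d ∈ (⊥ : IntermediateField F K) :=
    hbot ▸ IntermediateField.mem_adjoin_simple_self F d
  rw [IntermediateField.mem_bot] at hdbot
  obtain ⟨c, hc⟩ := hdbot
  have hAα : A α ≠ 0 := fun h => hα ((map_eq_zero A).1 h)
  have hAβ : A β ≠ 0 := fun h => hβ ((map_eq_zero A).1 h)
  have hx' : σ x = x + A (c / α) := by
    rw [map_div₀]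
    field_simp
    linear_combination -hc
  have hy' : σ y = y + A (-(c / β)) := by
    rw [map_neg, map_div₀]
    field_simp
    linear_combination hc + hd2
  by_cases hc0 : c = 0
  · subst hc0
    constructor
    · simpa using hx'
    · simpa using hy'
  · exfalso
    have p1 : ringChar K ∣ m :=
      hm ▸ charDvd habelian σ x (c / α) (div_ne_zero hc0 hα) hx'
    have p2 : ringChar K ∣ n :=
      hn ▸ charDvd habelian σ y (-(c / β)) (neg_ne_zero.2 (div_ne_zero hc0 hβ)) hy'
    have hp : ringChar K ∣ 1 := hcop ▸ Nat.dvd_gcd p1 p2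
    have hp1 : ringChar K = 1 := Nat.dvd_one.1 hp
    haveI := ringChar.charP K
    have h10 : ((ringChar K : ℕ) : K) = 0 := CharP.cast_eq_zero K (ringChar K)
    rw [hp1] at h10
    exact one_ne_zero (by exact_mod_cast h10)

/-- **Corollary (cw).** Let `K/F` be a finite Galois extension whose Galois group is abelian.
If `x, y ∈ K` have degrees `m` and `n` over `F` with `gcd(m, n) = 1`, then
`F[x, y] = F[αx + βy]` for all nonzero `α, β ∈ F`. -/
theorem stmt1 (F K : Type*) [Field F] [Field K] [Algebra F K]
    [FiniteDimensional F K] [IsGalois F K]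
    (habelian : ∀ σ τ : K ≃ₐ[F] K, σ * τ = τ * σ)
    (x y : K) (m n : ℕ)
    (hm : Module.finrank F (IntermediateField.adjoin F {x}) = m)
    (hn : Module.finrank F (IntermediateField.adjoin F {y}) = n)
    (hcop : Nat.gcd m n = 1) :
    ∀ α β : F, α ≠ 0 → β ≠ 0 →
      IntermediateField.adjoin F {x, y} =
        IntermediateField.adjoin F {α • x + β • y} := by
  intro α β hα hβ
  set z := α • x + β • y with hz
  have key : ∀ w : K, w = x ∨ w = y → w ∈ IntermediateField.adjoin F {z} := by
    intro w hw
    rw [← IsGalois.fixedField_fixingSubgroup (IntermediateField.adjoin F {z})]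
    rintro ⟨σ, hσ⟩
    have hσz : σ z = z := by
      rw [IntermediateField.mem_fixingSubgroup_iff] at hσ
      exact hσ z (IntermediateField.mem_adjoin_simple_self F z)
    have := keyFix habelian x y m n hm hn hcop α β hα hβ σ hσz
    show σ w = w
    rcases hw with rfl | rfl
    · exact this.1
    · exact this.2
  apply le_antisymm
  · rw [IntermediateField.adjoin_le_iff]
    intro a ha
    rcases ha with rfl | ha
    · exact key a (Or.inl rfl)
    · rw [Set.mem_singleton_iff] at ha
      subst ha
      exact key a (Or.inr rfl)
  · rw [IntermediateField.adjoin_simple_le_iff]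
    have hx : x ∈ IntermediateField.adjoin F {x, y} :=
      IntermediateField.subset_adjoin F _ (Set.mem_insert x {y})
    have hy : y ∈ IntermediateField.adjoin F {x, y} :=
      IntermediateField.subset_adjoin F _ (Set.mem_insert_of_mem x rfl)
    show α • x + β • y ∈ IntermediateField.adjoin F {x, y}
    rw [Algebra.smul_def, Algebra.smul_def]
    exact add_mem (mul_mem (IntermediateField.algebraMap_mem _ α) hx)
      (mul_mem (IntermediateField.algebraMap_mem _ β) hy)
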